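/- Let p be a prime and let A be an F-finite Noetherian integral domain of characteristic p. Then A is strongly F-regular if and only if for every maximal ideal m of A the local ring A_m (the localization of A at m) is strongly F-regular. (This is the affine content of Smith's theorem: Spec A is globally F-regular if and only if A is strongly F-regular if and only if Spec A is F-regular.) -/

import Mathlib

/-- `A` is strongly `F`-regular with respect to the prime `p`: for every
non-zerodivisor `c` there are `e ≥ 0` and an additive map `ψ : A → A` which is
`A`-linear for the `A`-action on the source restricted along the `e`-th Frobenius
power and splits `a ↦ c * a ^ p ^ e`. -/
def IsStronglyFRegular (p : ℕ) (A : Type*) [CommRing A] : Prop :=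
  ∀ c : A, (∀ x : A, c * x = 0 → x = 0) →
    ∃ (e : ℕ) (ψ : A →+ A),
      (∀ r x : A, ψ (r ^ p ^ e * x) = r * ψ x) ∧
      ∀ a : A, ψ (c * a ^ p ^ e) = a

/-- `A` is `F`-finite: the Frobenius endomorphism `a ↦ a ^ p` is a finite ring map. -/
def IsFFinite (p : ℕ) (A : Type*) [CommRing A] [ExpChar A p] : Prop :=
  (frobenius A p).Finite

section FrobSetup

variable (p : ℕ) [Fact p.Prime]

/-- Pushforward of a ring along the `e`-th Frobenius power, as a type synonym. -/
def Frob (_p e : ℕ) (A : Type*) : Type _ := A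

instance (e : ℕ) {A : Type*} [CommRing A] : AddCommGroup (Frob p e A) :=
  inferInstanceAs (AddCommGroup A)

instance (e : ℕ) {A B : Type*} [CommRing A] [CommRing B] [Algebra A B] [CharP B p] :
    Module A (Frob p e B) :=
  Module.compHom B ((iterateFrobenius B p e).comp (algebraMap A B))

/-- The identity of `A` as a map into `Frob p e A`. -/
def Frob.mk (e : ℕ) {A : Type*} (x : A) : Frob p e A := x

/-- The identity of `Frob p e A` as a map to `A`. -/
def Frob.val (e : ℕ) {A : Type*} (x : Frob p e A) : A := x

lemma Frob.smul_def (e : ℕ) {A B : Type*} [CommRing A] [CommRing B] [Algebra A B] [CharP B p]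
    (r : A) (x : Frob p e B) :
    r • x = Frob.mk p e (algebraMap A B r ^ p ^ e * Frob.val p e x) := rfl

lemma Frob.mk_add (e : ℕ) {A : Type*} [CommRing A] (x y : A) :
    Frob.mk p e (x + y) = Frob.mk p e x + Frob.mk p e y := rfl

end FrobSetup

section Backward

variable (p : ℕ) [Fact p.Prime] (A : Type*) [CommRing A] [IsDomain A] [CharP A p]

/-- Evaluation of a Frobenius-semilinear functional at a point, as a linear map. -/
def evalAt (e : ℕ) (c : Frob p e A) : (Frob p e A →ₗ[A] A) →ₗ[A] A where
  toFun φ := φ c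
  map_add' _ _ := rfl
  map_smul' _ _ := rfl

variable (B : Type*) [CommRing B] [Algebra A B] [CharP B p]

/-- The natural map `F^e_* A → F^e_* B`. -/
def frobAlgMap (e : ℕ) : Frob p e A →ₗ[A] Frob p e B where
  toFun x := Frob.mk p e (algebraMap A B (Frob.val p e x))
  map_add' x y := congrArg (Frob.mk p e) (map_add (algebraMap A B) _ _)
  map_smul' r x := by
    show Frob.mk p e (algebraMap A B (r ^ p ^ e * Frob.val p e x)) = _
    rw [map_mul, map_pow]
    rfl

variable (m : Ideal A) [m.IsMaximal]

lemma isLocalizedModule_frobAlgMap [IsLocalization m.primeCompl B] (e : ℕ) :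
    IsLocalizedModule m.primeCompl (frobAlgMap p A B e) := by
  obtain ⟨k, hk⟩ : ∃ k, p ^ e = k + 1 :=
    ⟨p ^ e - 1, (Nat.succ_pred_eq_of_pos (pow_pos (Fact.out : p.Prime).pos e)).symm⟩
  constructor
  · intro s
    rw [Module.End.isUnit_iff]
    have hu : IsUnit ((algebraMap A B) (s : A) ^ p ^ e) := (IsLocalization.map_units B s).pow _
    constructor
    · intro x y hxy
      have h1 : algebraMap A B (s : A) ^ p ^ e * Frob.val p e x
          = algebraMap A B (s : A) ^ p ^ e * Frob.val p e y := by
        have := hxy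
        rw [Module.algebraMap_end_apply, Module.algebraMap_end_apply,
          Frob.smul_def, Frob.smul_def] at this
        exact this
      exact hu.mul_left_cancel h1
    · intro y
      refine ⟨Frob.mk p e ((hu.unit⁻¹ : Bˣ) * Frob.val p e y), ?_⟩
      rw [Module.algebraMap_end_apply, Frob.smul_def]
      show Frob.mk p e (algebraMap A B (s : A) ^ p ^ e * ((hu.unit⁻¹ : Bˣ) * Frob.val p e y))
        = y
      rw [← mul_assoc, IsUnit.mul_val_inv, one_mul]
      rfl
  · intro y
    obtain ⟨⟨a, s⟩, hy⟩ := IsLocalization.surj m.primeCompl (Frob.val p e y)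
    refine ⟨⟨Frob.mk p e (a * (s : A) ^ k), s⟩, ?_⟩
    have key : algebraMap A B (s : A) ^ (k + 1) * Frob.val p e y
        = algebraMap A B (a * (s : A) ^ k) := by
      rw [map_mul, map_pow]
      linear_combination ((algebraMap A B (s : A)) ^ k) * hy
    show Frob.mk p e (algebraMap A B (s : A) ^ p ^ e * Frob.val p e y)
      = Frob.mk p e (algebraMap A B (a * (s : A) ^ k))
    rw [hk]
    exact congrArg (Frob.mk p e) key
  · intro x y hxy
    have h1 : algebraMap A B (Frob.val p e x) = algebraMap A B (Frob.val p e y) := congrArg (Frob.val p e) hxy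
    obtain ⟨u, hu⟩ := IsLocalization.exists_of_eq (M := m.primeCompl) h1
    have hu0 : (u : A) ≠ 0 := fun h0 => u.2 (h0 ▸ m.zero_mem)
    have h2 : Frob.val p e x = Frob.val p e y := mul_left_cancel₀ hu0 hu
    exact ⟨1, by rw [one_smul, one_smul]; exact h2⟩


lemma finite_frob (hFF : IsFFinite p A) (e : ℕ) : Module.Finite A (Frob p e A) := by
  have h : (iterateFrobenius A p e).Finite := by
    induction e with
    | zero => rw [iterateFrobenius_zero]; exact RingHom.Finite.id A
    | succ n ih =>
      rw [show n + 1 = n + 1 from rfl, iterateFrobenius_add A p n 1, iterateFrobenius_one]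
      exact RingHom.Finite.comp ih hFF
  exact h

lemma descend [CharP (Localization.AtPrime m) p] [IsNoetherianRing A]
    (hFF : IsFFinite p A) (e : ℕ) (c : A)
    (Φ : Frob p e (Localization.AtPrime m) →ₗ[A] Localization.AtPrime m)
    (hΦ : Φ (Frob.mk p e (algebraMap A (Localization.AtPrime m) c)) = 1) :
    ∃ φ : Frob p e A →ₗ[A] A, φ (Frob.mk p e c) ∉ m := by
  haveI := finite_frob p A hFF e
  haveI := Module.finitePresentation_of_finite A (Frob p e A)
  haveI := isLocalizedModule_frobAlgMap p A (Localization.AtPrime m) m e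
  obtain ⟨⟨φ, s⟩, hs⟩ := IsLocalizedModule.surj m.primeCompl
    (IsLocalizedModule.map m.primeCompl
      (frobAlgMap p A (Localization.AtPrime m) e)
      (Algebra.linearMap A (Localization.AtPrime m))) Φ
  have h1 := LinearMap.congr_fun hs (frobAlgMap p A (Localization.AtPrime m) e (Frob.mk p e c))
  rw [IsLocalizedModule.map_apply] at h1
  have h2 : frobAlgMap p A (Localization.AtPrime m) e (Frob.mk p e c)
      = Frob.mk p e (algebraMap A (Localization.AtPrime m) c) := rfl
  rw [LinearMap.smul_apply, h2, hΦ, Algebra.linearMap_apply] at h1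
  have h3 : algebraMap A (Localization.AtPrime m) (s : A)
      = algebraMap A (Localization.AtPrime m) (φ (Frob.mk p e c)) := by
    rw [← h1, Submonoid.smul_def, Algebra.smul_def, mul_one]
  have h4 : (s : A) = φ (Frob.mk p e c) :=
    IsLocalization.injective (Localization.AtPrime m) m.primeCompl_le_nonZeroDivisors h3
  exact ⟨φ, h4 ▸ s.2⟩


/-- Level-raising map `F^{e+1}_* A → F^e_* A` built from a level-one splitting `β`. -/
def raise (e : ℕ) (β : Frob p 1 A →ₗ[A] A) (c : A) : Frob p (e + 1) A →ₗ[A] Frob p e A where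
  toFun x := Frob.mk p e (β (Frob.mk p 1 (c ^ (p - 1) * Frob.val p (e + 1) x)))
  map_add' x y := by
    show Frob.mk p e (β (Frob.mk p 1
        (c ^ (p - 1) * (Frob.val p (e + 1) x + Frob.val p (e + 1) y)))) = _
    rw [mul_add, Frob.mk_add, map_add]
    rfl
  map_smul' r x := by
    show Frob.mk p e (β (Frob.mk p 1
        (c ^ (p - 1) * (algebraMap A A r ^ p ^ (e + 1) * Frob.val p (e + 1) x)))) = _
    have e1 : c ^ (p - 1) * (algebraMap A A r ^ p ^ (e + 1) * Frob.val p (e + 1) x)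
        = algebraMap A A (r ^ p ^ e) ^ p ^ 1 * (c ^ (p - 1) * Frob.val p (e + 1) x) := by
      rw [Algebra.algebraMap_self_apply, Algebra.algebraMap_self_apply, pow_one, ← pow_mul, ← pow_succ]
      ring
    rw [e1]
    have e2 : Frob.mk p 1 (algebraMap A A (r ^ p ^ e) ^ p ^ 1
          * (c ^ (p - 1) * Frob.val p (e + 1) x))
        = (r ^ p ^ e) • Frob.mk p 1 (c ^ (p - 1) * Frob.val p (e + 1) x) := rfl
    rw [e2, map_smul]
    rfl

lemma raise_spec (e : ℕ) (β : Frob p 1 A →ₗ[A] A) (c : A)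
    (hβ : β (Frob.mk p 1 (1 : A)) = 1) :
    raise p A e β c (Frob.mk p (e + 1) c) = Frob.mk p e c := by
  show Frob.mk p e (β (Frob.mk p 1 (c ^ (p - 1) * c))) = _
  rw [pow_sub_one_mul (Fact.out : p.Prime).pos.ne' c]
  have e1 : Frob.mk p 1 (c ^ p) = c • Frob.mk p 1 (1 : A) := by
    rw [Frob.smul_def, Algebra.algebraMap_self_apply, pow_one]
    exact congrArg (Frob.mk p 1) (mul_one (c ^ p)).symm
  rw [e1, map_smul, hβ, smul_eq_mul, mul_one]

lemma exists_beta [IsNoetherianRing A] (hFF : IsFFinite p A) (hA : ¬ IsField A)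
    (hloc : ∀ (m : Ideal A) [m.IsMaximal], IsStronglyFRegular p (Localization.AtPrime m)) :
    ∃ β : Frob p 1 A →ₗ[A] A, β (Frob.mk p 1 (1 : A)) = 1 := by
  set I : Submodule A A := LinearMap.range (evalAt p A 1 (Frob.mk p 1 (1 : A))) with hIdef
  have hI : I = ⊤ := by
    by_contra hne
    obtain ⟨m, hm, hIm⟩ := Ideal.exists_le_maximal I hne
    haveI := hm
    haveI : CharP (Localization.AtPrime m) p :=
      charP_of_injective_algebraMap
        (IsLocalization.injective _ m.primeCompl_le_nonZeroDivisors) p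
    have hinj : Function.Injective (algebraMap A (Localization.AtPrime m)) :=
      IsLocalization.injective _ m.primeCompl_le_nonZeroDivisors
    -- m is not the zero ideal
    have hm0 : m ≠ ⊥ := by
      rintro rfl
      refine hA ⟨exists_pair_ne A, mul_comm, ?_⟩
      intro a ha
      have hsp : Ideal.span {a} = ⊤ := by
        rcases eq_or_ne (Ideal.span {a}) ⊤ with h | h
        · exact h
        · exact absurd (Ideal.span_singleton_eq_bot.mp (hm.eq_of_le h bot_le).symm) ha
      exact (Ideal.span_singleton_eq_top.mp hsp).exists_right_inv
    obtain ⟨t, htm, ht0⟩ := Submodule.exists_mem_ne_zero_of_ne_bot hm0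
    have htl : algebraMap A (Localization.AtPrime m) t ≠ 0 := fun h0 =>
      ht0 (hinj (by rw [h0, map_zero]))
    obtain ⟨e', ψ, hsem, hspl⟩ := hloc m (algebraMap A (Localization.AtPrime m) t)
      (fun x hx => (mul_eq_zero.mp hx).resolve_left htl)
    obtain ⟨k, hk⟩ : ∃ k, e' = k + 1 := by
      cases e' with
      | succ k => exact ⟨k, rfl⟩
      | zero =>
        exfalso
        have h1 : ψ (algebraMap A (Localization.AtPrime m) t * 1) = 1 := by
          simpa using hspl 1
        have h2 : ψ (algebraMap A (Localization.AtPrime m) t * 1)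
            = algebraMap A (Localization.AtPrime m) t * ψ 1 := by
          simpa using hsem (algebraMap A (Localization.AtPrime m) t) 1
        have : IsUnit (algebraMap A (Localization.AtPrime m) t) :=
          IsUnit.of_mul_eq_one _ (h2 ▸ h1)
        exact ((IsLocalization.AtPrime.isUnit_to_map_iff
          (Localization.AtPrime m) m t).mp this) htm
    subst hk
    set Φ : Frob p 1 (Localization.AtPrime m) →ₗ[A] Localization.AtPrime m :=
      { toFun := fun x => ψ (algebraMap A (Localization.AtPrime m) t
          * Frob.val p 1 x ^ p ^ k)
        map_add' := fun x y => by
          show ψ (algebraMap A (Localization.AtPrime m) t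
              * (Frob.val p 1 x + Frob.val p 1 y) ^ p ^ k) = _
          rw [add_pow_char_pow, mul_add, map_add]
        map_smul' := fun r x => by
          show ψ (algebraMap A (Localization.AtPrime m) t
              * (algebraMap A (Localization.AtPrime m) r ^ p ^ 1 * Frob.val p 1 x) ^ p ^ k)
            = _
          have e1 : algebraMap A (Localization.AtPrime m) t
              * (algebraMap A (Localization.AtPrime m) r ^ p ^ 1 * Frob.val p 1 x) ^ p ^ k
              = algebraMap A (Localization.AtPrime m) r ^ p ^ (k + 1)
                * (algebraMap A (Localization.AtPrime m) t * Frob.val p 1 x ^ p ^ k) := by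
            rw [pow_one, mul_pow, ← pow_mul, ← pow_succ']
            ring
          rw [e1, hsem, Algebra.smul_def]
          rfl } with hPhidef
    have hΦ : Φ (Frob.mk p 1 (algebraMap A (Localization.AtPrime m) (1 : A))) = 1 := by
      rw [show Frob.mk p 1 (algebraMap A (Localization.AtPrime m) (1 : A))
          = Frob.mk p 1 (1 : Localization.AtPrime m) from congrArg (Frob.mk p 1) (map_one _)]
      show ψ (algebraMap A (Localization.AtPrime m) t
          * (1 : Localization.AtPrime m) ^ p ^ k) = 1
      rw [one_pow]
      have := hspl 1
      rwa [one_pow] at this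
    obtain ⟨φ, hφ⟩ := descend p A m hFF 1 (1 : A) Φ hΦ
    exact hφ (hIm ⟨φ, rfl⟩)
  have h1 : (1 : A) ∈ I := hI ▸ Submodule.mem_top
  obtain ⟨β, hβ⟩ := h1
  exact ⟨β, hβ⟩


lemma backward [IsNoetherianRing A] (hFF : IsFFinite p A)
    (hloc : ∀ (m : Ideal A) [m.IsMaximal], IsStronglyFRegular p (Localization.AtPrime m)) :
    IsStronglyFRegular p A := by
  by_cases hA : IsField A
  · intro c hc
    have hc0 : c ≠ 0 := fun h => one_ne_zero (hc 1 (by rw [h, zero_mul]))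
    obtain ⟨b, hb⟩ := hA.mul_inv_cancel hc0
    refine ⟨0, AddMonoidHom.mk' (fun x => b * x) (fun x y => mul_add b x y), ?_, ?_⟩
    · intro r x
      show b * (r ^ p ^ 0 * x) = r * (b * x)
      rw [pow_zero, pow_one]
      ring
    · intro a
      show b * (c * a ^ p ^ 0) = a
      rw [pow_zero, pow_one, show b * (c * a) = c * b * a by ring, hb, one_mul]
  · obtain ⟨β, hβ⟩ := exists_beta p A hFF hA hloc
    intro c hc
    have hc0 : c ≠ 0 := fun h => one_ne_zero (hc 1 (by rw [h, zero_mul]))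
    set J : ℕ → Submodule A A := fun e => LinearMap.range (evalAt p A e (Frob.mk p e c))
      with hJdef
    have hmono : Monotone J := monotone_nat_of_le_succ (by
      intro e x hx
      obtain ⟨φ, rfl⟩ := hx
      refine ⟨φ ∘ₗ raise p A e β c, ?_⟩
      show φ (raise p A e β c (Frob.mk p (e + 1) c)) = φ (Frob.mk p e c)
      rw [raise_spec p A e β c hβ])
    have hJtop : (⨆ e, J e) = ⊤ := by
      by_contra hne
      obtain ⟨m, hm, hIm⟩ := Ideal.exists_le_maximal _ hne
      haveI := hm
      haveI : CharP (Localization.AtPrime m) p :=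
        charP_of_injective_algebraMap
          (IsLocalization.injective _ m.primeCompl_le_nonZeroDivisors) p
      have hinj : Function.Injective (algebraMap A (Localization.AtPrime m)) :=
        IsLocalization.injective _ m.primeCompl_le_nonZeroDivisors
      have hcl : algebraMap A (Localization.AtPrime m) c ≠ 0 := fun h0 =>
        hc0 (hinj (by rw [h0, map_zero]))
      obtain ⟨e, ψ, hsem, hspl⟩ := hloc m (algebraMap A (Localization.AtPrime m) c)
        (fun x hx => (mul_eq_zero.mp hx).resolve_left hcl)
      set Φ : Frob p e (Localization.AtPrime m) →ₗ[A] Localization.AtPrime m :=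
        { toFun := fun x => ψ (Frob.val p e x)
          map_add' := fun x y => ψ.map_add _ _
          map_smul' := fun r x => by
            show ψ (algebraMap A (Localization.AtPrime m) r ^ p ^ e * Frob.val p e x)
              = r • ψ (Frob.val p e x)
            rw [hsem, Algebra.smul_def] } with hPhidef
      have hΦ : Φ (Frob.mk p e (algebraMap A (Localization.AtPrime m) c)) = 1 := by
        show ψ (algebraMap A (Localization.AtPrime m) c) = 1
        have := hspl 1
        rwa [one_pow, mul_one] at this
      obtain ⟨φ, hφ⟩ := descend p A m hFF e c Φ hΦ
      exact hφ (hIm (le_iSup J e ⟨φ, rfl⟩))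
    have h1 : (1 : A) ∈ ⨆ e, J e := hJtop ▸ Submodule.mem_top
    rw [Submodule.mem_iSup_of_directed _ hmono.directed_le] at h1
    obtain ⟨E, ψ₀, hψ₀⟩ := h1
    refine ⟨E, AddMonoidHom.mk' (fun x => ψ₀ (Frob.mk p E x))
      (fun x y => by
        show ψ₀ (Frob.mk p E (x + y)) = ψ₀ (Frob.mk p E x) + ψ₀ (Frob.mk p E y)
        rw [Frob.mk_add, map_add]), ?_, ?_⟩
    · intro r x
      show ψ₀ (Frob.mk p E (r ^ p ^ E * x)) = r * ψ₀ (Frob.mk p E x)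
      have e1 : Frob.mk p E (r ^ p ^ E * x) = r • Frob.mk p E x := by
        rw [Frob.smul_def, Algebra.algebraMap_self_apply]
        rfl
      rw [e1, map_smul, smul_eq_mul]
    · intro a
      show ψ₀ (Frob.mk p E (c * a ^ p ^ E)) = a
      have e1 : Frob.mk p E (c * a ^ p ^ E) = a • Frob.mk p E c := by
        rw [Frob.smul_def, Algebra.algebraMap_self_apply]
        exact congrArg (Frob.mk p E) (mul_comm c (a ^ p ^ E))
      have hψc : ψ₀ (Frob.mk p E c) = 1 := hψ₀
      rw [e1, map_smul, hψc, smul_eq_mul, mul_one]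

end Backward


section Forward

variable {p : ℕ} [Fact p.Prime] {A : Type*} [CommRing A] [IsDomain A]
variable (m : Ideal A) [m.IsMaximal]

lemma mk_eq_mk_iff_dom {a b : A} {s t : m.primeCompl} :
    Localization.mk a s = Localization.mk b t ↔ (t : A) * a = (s : A) * b := by
  rw [Localization.mk_eq_mk_iff, Localization.r_iff_exists]
  constructor
  · rintro ⟨c, hc⟩
    have hc0 : (c : A) ≠ 0 := fun h0 => c.2 (h0 ▸ m.zero_mem)
    exact mul_left_cancel₀ hc0 hc
  · intro h
    exact ⟨1, by rw [h]⟩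

lemma forward_aux (h : IsStronglyFRegular p A) :
    IsStronglyFRegular p (Localization.AtPrime m) := by
  intro c' hc'
  obtain ⟨⟨c, s⟩, rfl⟩ : ∃ y : A × m.primeCompl, Localization.mk y.1 y.2 = c' := by
    induction c' using Localization.ind with
    | _ y => exact ⟨y, rfl⟩
  have hc0 : c ≠ 0 := by
    rintro rfl
    rw [Localization.mk_zero] at hc'
    exact one_ne_zero (hc' 1 (by rw [zero_mul]))
  obtain ⟨e, ψ, hsem, hspl⟩ := h c fun x hx =>
    (mul_eq_zero.mp hx).resolve_left hc0
  obtain ⟨k, hk⟩ : ∃ k, p ^ e = k + 1 :=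
    ⟨p ^ e - 1, (Nat.succ_pred_eq_of_pos (pow_pos (Fact.out : p.Prime).pos e)).symm⟩
  rw [hk] at hsem hspl
  -- the localized semilinear map
  set F : Localization.AtPrime m → Localization.AtPrime m := fun y =>
    Localization.liftOn y (fun a t => Localization.mk (ψ (a * (t : A) ^ k)) t)
      (by
        rintro a b t u hr
        have h1 : (u : A) * a = (t : A) * b := by
          rw [← Localization.mk_eq_mk_iff] at hr
          exact (mk_eq_mk_iff_dom m).mp hr
        rw [mk_eq_mk_iff_dom m]
        have e1 : (u : A) * ψ (a * (t : A) ^ k) = ψ ((u : A) ^ (k + 1) * (a * (t : A) ^ k)) :=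
          (hsem _ _).symm
        have e2 : (t : A) * ψ (b * (u : A) ^ k) = ψ ((t : A) ^ (k + 1) * (b * (u : A) ^ k)) :=
          (hsem _ _).symm
        rw [e1, e2]
        congr 1
        linear_combination ((u : A) ^ k * (t : A) ^ k) * h1) with hF
  have Fmk : ∀ (a : A) (t : m.primeCompl),
      F (Localization.mk a t) = Localization.mk (ψ (a * (t : A) ^ k)) t := fun a t => rfl
  have Fadd : ∀ y z, F (y + z) = F y + F z := by
    intro y z
    induction y using Localization.ind with
    | _ y =>
      induction z using Localization.ind with
      | _ z =>
        obtain ⟨a, t⟩ := y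
        obtain ⟨b, u⟩ := z
        rw [Localization.add_mk, Fmk, Fmk, Fmk, Localization.add_mk]
        congr 1
        · push_cast
          have e1 : ((t : A) * b + (u : A) * a) * ((t : A) * (u : A)) ^ k
              = (t : A) ^ (k + 1) * (b * (u : A) ^ k)
                + (u : A) ^ (k + 1) * (a * (t : A) ^ k) := by ring
          rw [e1, map_add, hsem, hsem]
  have Fsem : ∀ u y, F (u ^ p ^ e * y) = u * F y := by
    intro u y
    induction u using Localization.ind with
    | _ u =>
      induction y using Localization.ind with
      | _ y =>
        obtain ⟨r, v⟩ := u
        obtain ⟨a, t⟩ := y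
        dsimp only
        rw [hk, Localization.mk_pow, Localization.mk_mul, Fmk, Fmk, Localization.mk_mul]
        have e1 : r ^ (k + 1) * a * ((v ^ (k + 1) * t : m.primeCompl) : A) ^ k
            = (r * (v : A) ^ k) ^ (k + 1) * (a * (t : A) ^ k) := by
          push_cast; ring
        rw [e1, hsem, mk_eq_mk_iff_dom m]
        push_cast; ring
  have hpsiC : ψ c = 1 := by
    have := hspl 1
    rwa [one_pow, mul_one] at this
  have Fone : F (Localization.mk (s : A) 1 * Localization.mk c s) = 1 := by
    rw [Localization.mk_mul, Fmk]
    have e1 : (s : A) * c * ((1 * s : m.primeCompl) : A) ^ k = (s : A) ^ (k + 1) * c := by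
      push_cast; ring
    rw [e1, hsem, hpsiC, mul_one]
    have e2 : ((1 * s : m.primeCompl) : A) = (s : A) := by push_cast; ring
    rw [one_mul]
    exact Localization.mk_self s
  -- assemble the final additive map
  refine ⟨e, AddMonoidHom.mk' (fun y => F (Localization.mk (s : A) 1 * y)) ?_, ?_, ?_⟩
  · intro y z
    show F (Localization.mk (s : A) 1 * (y + z))
        = F (Localization.mk (s : A) 1 * y) + F (Localization.mk (s : A) 1 * z)
    rw [mul_add, Fadd]
  · intro r x
    show F (Localization.mk (s : A) 1 * (r ^ p ^ e * x)) = r * F (Localization.mk (s : A) 1 * x)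
    rw [show Localization.mk (s : A) 1 * (r ^ p ^ e * x)
        = r ^ p ^ e * (Localization.mk (s : A) 1 * x) by ring, Fsem]
  · intro a
    show F (Localization.mk (s : A) 1 * (Localization.mk c s * a ^ p ^ e)) = a
    rw [show Localization.mk (s : A) 1 * (Localization.mk c s * a ^ p ^ e)
        = a ^ p ^ e * (Localization.mk (s : A) 1 * Localization.mk c s) by ring, Fsem, Fone,
      mul_one]

end Forward

/-- An F-finite Noetherian domain of characteristic p is strongly F-regular if and
only if all its localizations at maximal ideals are strongly F-regular. -/
theorem stronglyFRegular_iff_localizations (p : ℕ) [Fact p.Prime] (A : Type*) [CommRing A]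
    [IsDomain A] [CharP A p] [IsNoetherianRing A] (hFF : IsFFinite p A) :
    IsStronglyFRegular p A ↔
      ∀ (m : Ideal A) [m.IsMaximal], IsStronglyFRegular p (Localization.AtPrime m) := by
  constructor
  · intro h m hm
    haveI := hm
    exact forward_aux m h
  · intro h
    exact backward p A hFF h
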